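/- Let n ≥ 1 be an integer and K > 0, and suppose φ_{nK}'(0) < −r/K. Define f(b) := ψ(b)/ψ'(b) − φ_{nK}(b)/φ_{nK}'(b) for b ≥ 0. Then the equation f(b) = K/r has a unique positive solution b̂; moreover 0 < b̂ ≤ b*, where b* is the unique inflection point of ψ. -/

import Mathlib

open Set Filter Topology

lemma aux_deriv_nonneg_of_monotoneOn {f : ℝ → ℝ} {x : ℝ} (hd : DifferentiableAt ℝ f x)
    (hm : MonotoneOn f (Ici (0:ℝ))) (hx : 0 ≤ x) : 0 ≤ deriv f x := by
  by_contra h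
  push_neg at h
  have hs := hasDerivAt_iff_tendsto_slope.mp hd.hasDerivAt
  have hev : ∀ᶠ y in 𝓝[≠] x, slope f x y < 0 := hs.eventually_lt_const h
  have hsub : 𝓝[>] x ≤ 𝓝[≠] x := nhdsWithin_mono x fun y hy => ne_of_gt hy
  obtain ⟨y, hsl, hy⟩ := ((hev.filter_mono hsub).and eventually_mem_nhdsWithin).exists
  have hy' : x < y := hy
  rw [slope_def_field] at hsl
  have h1 : f y - f x < 0 := by
    by_contra h2
    push_neg at h2
    exact absurd hsl (not_lt.mpr (div_nonneg h2 (by linarith)))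
  have h2 : f x ≤ f y := hm hx (by simp only [mem_Ici]; linarith : y ∈ Ici (0:ℝ)) hy'.le
  linarith

lemma aux_deriv_nonpos_of_antitoneOn {f : ℝ → ℝ} {x : ℝ} (hd : DifferentiableAt ℝ f x)
    (hm : AntitoneOn f (Ici (0:ℝ))) (hx : 0 ≤ x) : deriv f x ≤ 0 := by
  have := aux_deriv_nonneg_of_monotoneOn (f := fun y => -f y) (hd.neg)
    (fun a ha b hb hab => neg_le_neg (hm ha hb hab)) hx
  rw [deriv.fun_neg] at this
  linarith

/-- under φ_{nK}'(0) < −r/K, the equation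
ψ(b)/ψ'(b) − φ_{nK}(b)/φ_{nK}'(b) = K/r has a unique positive solution b̂,
and 0 < b̂ ≤ b*, where b* is the unique inflection point of ψ. -/
theorem stmt_10
    (r c : ℝ) (hr : 0 < r) (hc : 0 < c)
    (μ σ : ℝ → ℝ) (hμ : ContDiff ℝ 1 μ) (hσ : ContDiff ℝ 1 σ)
    (hσpos : ∀ x ≥ (0:ℝ), 0 < σ x ^ 2)
    (hμderiv : ∀ x ≥ (0:ℝ), deriv μ x < r)
    (hμ0 : 0 < μ 0)
    (hμc : ∀ x ≥ c, μ x ≤ r * x - 1 / c)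
    (ψ : ℝ → ℝ) (hψC : ContDiff ℝ 3 ψ)
    (hψ0 : ψ 0 = 0) (hψd0 : deriv ψ 0 = 1)
    (hψpos : ∀ x > (0:ℝ), 0 < ψ x)
    (hψmono : MonotoneOn ψ (Ici (0:ℝ)))
    (hψODE : ∀ x ≥ (0:ℝ),
      (1/2) * σ x ^ 2 * deriv (deriv ψ) x + μ x * deriv ψ x - r * ψ x = 0)
    (bstar : ℝ) (hbstar : 0 < bstar)
    (hconc : ∀ x, 0 ≤ x → x < bstar → deriv (deriv ψ) x < 0)
    (hconv : ∀ x, bstar < x → 0 < deriv (deriv ψ) x)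
    (φ : ℝ → ℝ → ℝ)
    (hφC : ∀ A ≥ (0:ℝ), ContDiff ℝ 2 (φ A))
    (hφ0 : ∀ A ≥ (0:ℝ), φ A 0 = 1)
    (hφpos : ∀ A ≥ (0:ℝ), ∀ x ≥ (0:ℝ), 0 < φ A x)
    (hφanti : ∀ A ≥ (0:ℝ), AntitoneOn (φ A) (Ici (0:ℝ)))
    (hφlim : ∀ A ≥ (0:ℝ), Tendsto (φ A) atTop (nhds 0))
    (hφODE : ∀ A ≥ (0:ℝ), ∀ x ≥ (0:ℝ),
      (1/2) * σ x ^ 2 * deriv (deriv (φ A)) x + (μ x - A) * deriv (φ A) x - r * φ A x = 0)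
    (n : ℕ) (hn : 1 ≤ n) (K : ℝ) (hK : 0 < K)
    (hcond : deriv (φ ((n : ℝ) * K)) 0 < -(r / K))
    (f : ℝ → ℝ)
    (hf : ∀ b, f b = ψ b / deriv ψ b
      - φ ((n : ℝ) * K) b / deriv (φ ((n : ℝ) * K)) b) :
    ∃ bh : ℝ, 0 < bh ∧ bh ≤ bstar ∧ f bh = K / r ∧
      ∀ b' : ℝ, 0 < b' → f b' = K / r → b' = bh := by
  -- notation
  set A : ℝ := (n : ℝ) * K with hA_def
  have hA0 : 0 ≤ A := by positivity
  have hKA : K ≤ A := by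
    have : (1:ℝ) ≤ (n:ℝ) := by exact_mod_cast hn
    nlinarith
  set Φ : ℝ → ℝ := φ A with hΦ_def
  -- regularity
  have dμ : Differentiable ℝ μ := hμ.differentiable one_ne_zero
  have cμ' : Continuous (deriv μ) := hμ.continuous_deriv le_rfl
  have cσ : Continuous σ := hσ.continuous
  have dψ : Differentiable ℝ ψ := hψC.differentiable (by norm_num)
  have hψC' : ContDiff ℝ 2 (deriv ψ) := by
    have h3 : ContDiff ℝ ((2:ℕ∞) + 1) ψ := by exact_mod_cast hψC
    exact (contDiff_succ_iff_deriv.mp h3).2.2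
  have dψ' : Differentiable ℝ (deriv ψ) := hψC'.differentiable (by norm_num)
  have cψ'' : Continuous (deriv (deriv ψ)) := hψC'.continuous_deriv (by norm_num)
  have hΦC : ContDiff ℝ 2 Φ := hφC A hA0
  have dΦ : Differentiable ℝ Φ := hΦC.differentiable (by norm_num)
  have hΦC' : ContDiff ℝ 1 (deriv Φ) := by
    have h2 : ContDiff ℝ ((1:ℕ∞) + 1) Φ := by exact_mod_cast hΦC
    exact (contDiff_succ_iff_deriv.mp h2).2.2
  have dΦ' : Differentiable ℝ (deriv Φ) := hΦC'.differentiable one_ne_zero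
  have cΦ'' : Continuous (deriv (deriv Φ)) := hΦC'.continuous_deriv le_rfl
  -- positivity of sigma^2 shorthands
  have hσ2ne : ∀ x ≥ (0:ℝ), σ x ^ 2 ≠ 0 := fun x hx => ne_of_gt (hσpos x hx)
  -- ODEs rearranged
  have hψ''eq : ∀ x ≥ (0:ℝ), deriv (deriv ψ) x
      = 2 / σ x ^ 2 * (r * ψ x - μ x * deriv ψ x) := by
    intro x hx
    have h := hψODE x hx
    have hne := hσ2ne x hx
    rw [div_mul_eq_mul_div, eq_div_iff hne]
    linear_combination 2 * h
  have hΦ''eq : ∀ x ≥ (0:ℝ), deriv (deriv Φ) x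
      = 2 / σ x ^ 2 * (r * Φ x - (μ x - A) * deriv Φ x) := by
    intro x hx
    have h := hφODE A hA0 x hx
    have hne := hσ2ne x hx
    rw [div_mul_eq_mul_div, eq_div_iff hne]
    linear_combination 2 * h
  -- φ' < 0 on [0,∞)
  have hΦ'nonpos : ∀ x ≥ (0:ℝ), deriv Φ x ≤ 0 := fun x hx =>
    aux_deriv_nonpos_of_antitoneOn (dΦ x) (hφanti A hA0) hx
  have hΦ'neg : ∀ x ≥ (0:ℝ), deriv Φ x < 0 := by
    intro x hx
    rcases eq_or_lt_of_le hx with h0 | h0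
    · have : deriv Φ 0 < 0 := lt_trans hcond (neg_lt_zero.mpr (by positivity))
      rwa [← h0]
    · rcases lt_or_eq_of_le (hΦ'nonpos x hx) with h | h
      · exact h
      · exfalso
        have hmax : IsLocalMax (deriv Φ) x := by
          filter_upwards [eventually_gt_nhds h0] with y hy
          rw [h]; exact hΦ'nonpos y hy.le
        have h2 : deriv (deriv Φ) x = 0 := hmax.deriv_eq_zero
        have h3 := hφODE A hA0 x hx
        rw [h2, h] at h3
        have hpos := hφpos A hA0 x hx
        nlinarith [h3, mul_pos hr hpos]
  -- psi' > 0 on [0,∞)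
  have hψ'bs_nonneg : 0 ≤ deriv ψ bstar :=
    aux_deriv_nonneg_of_monotoneOn (dψ bstar) hψmono hbstar.le
  have hψ''bs_le : deriv (deriv ψ) bstar ≤ 0 := by
    have htend : Tendsto (deriv (deriv ψ)) (𝓝[<] bstar) (𝓝 (deriv (deriv ψ) bstar)) :=
      (cψ''.continuousAt).continuousWithinAt
    refine le_of_tendsto htend ?_
    filter_upwards [Ioo_mem_nhdsLT_of_mem
      (show bstar ∈ Ioc (0:ℝ) bstar from ⟨hbstar, le_rfl⟩)] with y hy
    exact (hconc y hy.1.le hy.2).le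
  have hψ'bs : 0 < deriv ψ bstar := by
    rcases lt_or_eq_of_le hψ'bs_nonneg with h | h
    · exact h
    · exfalso
      have h0 := hψODE bstar hbstar.le
      rw [← h] at h0
      have hp := hψpos bstar hbstar
      have hs := hσpos bstar hbstar.le
      have h1 : σ bstar ^ 2 * deriv (deriv ψ) bstar ≤ 0 :=
        mul_nonpos_of_nonneg_of_nonpos hs.le hψ''bs_le
      nlinarith [mul_pos hr hp]
  have hψ'pos : ∀ x ≥ (0:ℝ), 0 < deriv ψ x := by
    intro x hx
    rcases lt_trichotomy x bstar with hlt | heq | hgt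
    · have hanti : StrictAntiOn (deriv ψ) (Icc 0 bstar) := by
        apply strictAntiOn_of_deriv_neg (convex_Icc 0 bstar) dψ'.continuous.continuousOn
        intro y hy
        rw [interior_Icc] at hy
        exact hconc y hy.1.le hy.2
      have := hanti ⟨hx, hlt.le⟩ ⟨hbstar.le, le_rfl⟩ hlt
      linarith
    · rwa [heq]
    · have hmono' : StrictMonoOn (deriv ψ) (Ici bstar) := by
        apply strictMonoOn_of_deriv_pos (convex_Ici bstar) dψ'.continuous.continuousOn
        intro y hy
        rw [interior_Ici] at hy
        exact hconv y hy
      have := hmono' self_mem_Ici (show x ∈ Ici bstar from hgt.le) hgt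
      linarith
  -- Φ'' > 0 on [0,∞) via integrating factor
  set R : ℝ → ℝ := fun x => r * Φ x - (μ x - A) * deriv Φ x with hR_def
  have dR : Differentiable ℝ R :=
    ((differentiable_const r).mul dΦ).sub ((dμ.sub_const A).mul dΦ')
  have hR_deriv : ∀ x, HasDerivAt R
      (r * deriv Φ x - (deriv μ x * deriv Φ x + (μ x - A) * deriv (deriv Φ) x)) x := by
    intro x
    have h1 : HasDerivAt (fun y => r * Φ y) (r * deriv Φ x) x := ((dΦ x).hasDerivAt).const_mul r
    have h2 : HasDerivAt (fun y => (μ y - A) * deriv Φ y)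
        (deriv μ x * deriv Φ x + (μ x - A) * deriv (deriv Φ) x) x := by
      have := (((dμ x).hasDerivAt.sub_const A).mul ((dΦ' x).hasDerivAt))
      exact this
    exact h1.sub h2
  set ρ : ℝ → ℝ := fun t => 2 / σ t ^ 2 * (μ t - A) with hρ_def
  have hρ_ca : ∀ t ≥ (0:ℝ), ContinuousAt ρ t := by
    intro t ht
    exact (continuousAt_const.div ((cσ.continuousAt).pow 2) (hσ2ne t ht)).mul
      ((dμ.continuous.continuousAt).sub continuousAt_const)
  have hρ_meas : Measurable ρ :=
    (measurable_const.div ((cσ.measurable).pow_const 2)).mul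
      ((dμ.continuous.measurable).sub_const A)
  set E : ℝ → ℝ := fun x => Real.exp (∫ t in (0:ℝ)..x, ρ t) with hE_def
  have hEpos : ∀ x, 0 < E x := fun x => Real.exp_pos _
  have hρ_int : ∀ x ≥ (0:ℝ), IntervalIntegrable ρ MeasureTheory.volume 0 x := by
    intro x hx
    apply ContinuousOn.intervalIntegrable
    intro t ht
    rw [uIcc_of_le hx] at ht
    exact (hρ_ca t ht.1).continuousWithinAt
  have hE_deriv : ∀ x ≥ (0:ℝ), HasDerivAt E (ρ x * E x) x := by
    intro x hx
    have hint : HasDerivAt (fun y => ∫ t in (0:ℝ)..y, ρ t) (ρ x) x :=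
      intervalIntegral.integral_hasDerivAt_right (hρ_int x hx)
        (hρ_meas.aestronglyMeasurable.stronglyMeasurableAtFilter) (hρ_ca x hx)
    have := hint.exp
    simpa [hE_def, mul_comm] using this
  have hREanti : StrictAntiOn (fun x => R x * E x) (Ici (0:ℝ)) := by
    apply strictAntiOn_of_deriv_neg (convex_Ici 0)
    · intro x hx
      exact ((dR x).continuousAt.mul (hE_deriv x hx).continuousAt).continuousWithinAt
    · intro x hx
      rw [interior_Ici] at hx
      have hx0 : (0:ℝ) ≤ x := hx.le
      have hD : HasDerivAt (fun y => R y * E y)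
          ((r * deriv Φ x - (deriv μ x * deriv Φ x + (μ x - A) * deriv (deriv Φ) x)) * E x
            + R x * (ρ x * E x)) x := (hR_deriv x).mul (hE_deriv x hx0)
      rw [hD.deriv]
      have hΦ'' := hΦ''eq x hx0
      have key : (r * deriv Φ x - (deriv μ x * deriv Φ x + (μ x - A) * deriv (deriv Φ) x)) * E x
          + R x * (ρ x * E x) = E x * ((r - deriv μ x) * deriv Φ x) := by
        rw [hΦ'']
        simp only [hR_def, hρ_def]
        ring
      rw [key]
      exact mul_neg_of_pos_of_neg (hEpos x)
        (mul_neg_of_pos_of_neg (by linarith [hμderiv x hx0]) (hΦ'neg x hx0))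
  have hRpos : ∀ x ≥ (0:ℝ), 0 < R x := by
    intro x₀ hx₀
    by_contra hcon
    push_neg at hcon
    have hRneg : ∀ x, x₀ < x → R x < 0 := by
      intro x hxx
      have h1 := hREanti (mem_Ici.mpr hx₀) (mem_Ici.mpr (le_trans hx₀ hxx.le)) hxx
      have h2 : R x₀ * E x₀ ≤ 0 := mul_nonpos_of_nonpos_of_nonneg hcon (hEpos x₀).le
      simp only at h1
      by_contra h3
      push_neg at h3
      have h4 : 0 ≤ R x * E x := mul_nonneg h3 (hEpos x).le
      linarith
    have hΦ''neg : ∀ x, x₀ < x → deriv (deriv Φ) x < 0 := by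
      intro x hxx
      have hx0 : (0:ℝ) ≤ x := le_trans hx₀ hxx.le
      rw [hΦ''eq x hx0]
      exact mul_neg_of_pos_of_neg (div_pos (by norm_num) (hσpos x hx0)) (hRneg x hxx)
    set z : ℝ := x₀ + 1 with hz
    have hz0 : (0:ℝ) ≤ z := by simp only [hz]; linarith
    set δ : ℝ := -deriv Φ z with hδ
    have hδpos : 0 < δ := by
      have := hΦ'neg z hz0
      simp only [hδ]; linarith
    have hΦ'anti : AntitoneOn (deriv Φ) (Ici z) := by
      apply antitoneOn_of_deriv_nonpos (convex_Ici z) dΦ'.continuous.continuousOn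
        dΦ'.differentiableOn
      intro y hy
      rw [interior_Ici] at hy
      exact (hΦ''neg y (by simp only [hz] at hy ⊢; linarith [mem_Ioi.mp hy])).le
    have hΦ'le : ∀ x ≥ z, deriv Φ x ≤ -δ := by
      intro x hxz
      have := hΦ'anti self_mem_Ici (mem_Ici.mpr hxz) hxz
      simp only [hδ]; linarith
    have hlin : AntitoneOn (fun x => Φ x + δ * x) (Ici z) := by
      apply antitoneOn_of_deriv_nonpos (convex_Ici z)
      · exact (dΦ.continuous.continuousOn).add (continuous_const.mul continuous_id).continuousOn
      · exact (dΦ.add ((differentiable_const δ).mul differentiable_id)).differentiableOn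
      · intro y hy
        rw [interior_Ici] at hy
        have hd : HasDerivAt (fun x => Φ x + δ * x) (deriv Φ y + δ * 1) y :=
          (dΦ y).hasDerivAt.add ((hasDerivAt_id y).const_mul δ)
        rw [hd.deriv]
        have := hΦ'le y (le_of_lt hy)
        linarith
    have hΦzpos := hφpos A hA0 z hz0
    set x₁ : ℝ := z + Φ z / δ + 1 with hx₁def
    have hx₁ : z ≤ x₁ := by
      have : 0 < Φ z / δ := div_pos hΦzpos hδpos
      simp only [hx₁def]; linarith
    have hle := hlin self_mem_Ici (mem_Ici.mpr hx₁) hx₁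
    have hΦx₁pos := hφpos A hA0 x₁ (le_trans hz0 hx₁)
    have hδx₁ : δ * x₁ = δ * z + Φ z + δ := by
      simp only [hx₁def]
      field_simp
    simp only at hle
    nlinarith
  have hΦ''pos : ∀ x ≥ (0:ℝ), 0 < deriv (deriv Φ) x := by
    intro x hx
    rw [hΦ''eq x hx]
    exact mul_pos (div_pos (by norm_num) (hσpos x hx)) (hRpos x hx)
  -- derivative of f
  have hfe : f = fun b => ψ b / deriv ψ b - Φ b / deriv Φ b := funext hf
  have hf_hasderiv : ∀ x ≥ (0:ℝ), HasDerivAt f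
      ((deriv ψ x * deriv ψ x - ψ x * deriv (deriv ψ) x) / deriv ψ x ^ 2
        - (deriv Φ x * deriv Φ x - Φ x * deriv (deriv Φ) x) / deriv Φ x ^ 2) x := by
    intro x hx
    rw [hfe]
    exact ((dψ x).hasDerivAt.div (dψ' x).hasDerivAt (ne_of_gt (hψ'pos x hx))).sub
      ((dΦ x).hasDerivAt.div (dΦ' x).hasDerivAt (ne_of_lt (hΦ'neg x hx)))
  have hfC : ContinuousOn f (Icc 0 bstar) := fun x hx =>
    ((hf_hasderiv x hx.1).continuousAt).continuousWithinAt
  have hfmono : StrictMonoOn f (Icc 0 bstar) := by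
    apply strictMonoOn_of_deriv_pos (convex_Icc 0 bstar) hfC
    intro x hx
    rw [interior_Icc] at hx
    rw [(hf_hasderiv x hx.1.le).deriv]
    have hψ' := hψ'pos x hx.1.le
    have hΦ' := hΦ'neg x hx.1.le
    have hψ'' := hconc x hx.1.le hx.2
    have hΦ'' := hΦ''pos x hx.1.le
    have hψp := hψpos x hx.1
    have hΦp := hφpos A hA0 x hx.1.le
    have h1 : 1 < (deriv ψ x * deriv ψ x - ψ x * deriv (deriv ψ) x) / deriv ψ x ^ 2 := by
      rw [lt_div_iff₀ (pow_two_pos_of_ne_zero (ne_of_gt hψ'))]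
      have hint : ψ x * deriv (deriv ψ) x < 0 := mul_neg_of_pos_of_neg hψp hψ''
      have e : deriv ψ x ^ 2 = deriv ψ x * deriv ψ x := sq (deriv ψ x)
      linarith only [hint, e]
    have h2 : (deriv Φ x * deriv Φ x - Φ x * deriv (deriv Φ) x) / deriv Φ x ^ 2 < 1 := by
      rw [div_lt_one (pow_two_pos_of_ne_zero (ne_of_lt hΦ'))]
      have hint : 0 < Φ x * deriv (deriv Φ) x := mul_pos hΦp hΦ''
      have e : deriv Φ x ^ 2 = deriv Φ x * deriv Φ x := sq (deriv Φ x)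
      linarith only [hint, e]
    linarith only [h1, h2]
  -- value at 0
  have hΦ'0 : deriv Φ 0 < 0 := hΦ'neg 0 le_rfl
  have hf0 : f 0 < K / r := by
    rw [hf 0, hψ0, hψd0, show Φ 0 = 1 from hφ0 A hA0, zero_div, zero_sub]
    have e : K * (r / K) = r := by field_simp
    have h1 : K * deriv Φ 0 < -r := by
      have h := mul_lt_mul_of_pos_left hcond hK
      rw [mul_neg, e] at h
      exact h
    rw [← div_neg, div_lt_div_iff₀ (by linarith) hr]
    linarith only [h1]
  -- value on [bstar, ∞)
  have hfbig : ∀ x ≥ bstar, K / r < f x := by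
    intro x hx
    have hx0 : (0:ℝ) ≤ x := le_trans hbstar.le hx
    have hψ'' : 0 ≤ deriv (deriv ψ) x := by
      rcases eq_or_lt_of_le hx with he | hlt
    -- he : bstar = x
      · rw [← he]
        have htend : Tendsto (deriv (deriv ψ)) (𝓝[>] bstar) (𝓝 (deriv (deriv ψ) bstar)) :=
          (cψ''.continuousAt).continuousWithinAt
        refine ge_of_tendsto htend ?_
        filter_upwards [self_mem_nhdsWithin] with y hy
        exact (hconv y hy).le
      · exact (hconv x hlt).le
    have hd2 : (0:ℝ) < 2 / σ x ^ 2 := div_pos (by norm_num) (hσpos x hx0)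
    have h1 : μ x * deriv ψ x ≤ r * ψ x := by
      rw [hψ''eq x hx0] at hψ''
      by_contra hcontra
      push_neg at hcontra
      have : 2 / σ x ^ 2 * (r * ψ x - μ x * deriv ψ x) < 0 :=
        mul_neg_of_pos_of_neg hd2 (by linarith only [hcontra])
      linarith only [this, hψ'']
    have h2 : (μ x - A) * deriv Φ x < r * Φ x := by
      have h := hΦ''pos x hx0
      rw [hΦ''eq x hx0] at h
      by_contra hcontra
      push_neg at hcontra
      have : 2 / σ x ^ 2 * (r * Φ x - (μ x - A) * deriv Φ x) ≤ 0 :=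
        mul_nonpos_of_nonneg_of_nonpos hd2.le (by linarith only [hcontra])
      linarith only [this, h]
    rw [hf x]
    have hψ' := hψ'pos x hx0
    have hΦ' := hΦ'neg x hx0
    have ha : μ x / r ≤ ψ x / deriv ψ x := by
      rw [div_le_div_iff₀ hr hψ']
      linarith only [h1]
    have hb : (A - μ x) / r < -(Φ x / deriv Φ x) := by
      rw [← div_neg, div_lt_div_iff₀ hr (by linarith : (0:ℝ) < -deriv Φ x)]
      have e : (A - μ x) * -deriv Φ x = (μ x - A) * deriv Φ x := by ring
      linarith only [h2, e]
    have hKr : K / r ≤ A / r := by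
      gcongr
    have hsum : A / r = μ x / r + (A - μ x) / r := by ring
    linarith
  -- existence
  obtain ⟨bh, hbhmem, hbhval⟩ :=
    intermediate_value_Ioo hbstar.le hfC ⟨hf0, hfbig bstar le_rfl⟩
  refine ⟨bh, hbhmem.1, hbhmem.2.le, hbhval, ?_⟩
  intro b' hb' hb'val
  rcases le_or_gt b' bstar with hle | hgt
  · exact hfmono.injOn ⟨hb'.le, hle⟩ ⟨hbhmem.1.le, hbhmem.2.le⟩ (by rw [hb'val, hbhval])
  · exact absurd hb'val (ne_of_gt (hfbig b' hgt.le))
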